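/- Let K be a number field, p a prime number, and f ∈ O_K[X] (resp. a polynomial in n variables with coefficients in the ring of integers O_K). Let ζ be an n-tuple of p-th roots of unity. Then the product ∏_{j=0}^{p-1} f(ζ^j · X) (where ζ^j · X denotes coordinatewise multiplication) has coefficients in O_K, and it is congruent modulo p·O_K[X] to f_p(X^p), where f_p is the polynomial obtained from f by raising each coefficient to the p-th power and X^p denotes the tuple (X_1^p, …, X_n^p). -/

import Mathlib

open NumberField MvPolynomial

set_option maxHeartbeats 1000000
set_option synthInstance.maxHeartbeats 400000

namespace Stmt0Aux

lemma sum_pow_prime {A : Type*} [CommRing A] {p : ℕ} (hp : p.Prime)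
    {ι : Type*} (s : Finset ι) (t : ι → A) :
    ∃ c : A, (∑ i ∈ s, t i) ^ p = (∑ i ∈ s, t i ^ p) + (p : A) * c := by
  classical
  induction s using Finset.induction_on with
  | empty => exact ⟨0, by simp [zero_pow hp.ne_zero]⟩
  | insert x s ha ih =>
    obtain ⟨c, hc⟩ := ih
    obtain ⟨r, hr⟩ := exists_add_pow_prime_eq hp (t _) (∑ i ∈ _, t i)
    refine ⟨t x * (∑ i ∈ s, t i) * r + c, ?_⟩
    rw [Finset.sum_insert ha, Finset.sum_insert ha, hr, hc]
    ring

lemma frob {k : Type*} [CommRing k] {n p : ℕ} (hp : p.Prime) (f : MvPolynomial (Fin n) k) :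
    ∃ c, f ^ p = (f.support.sum fun m => monomial (p • m) (f.coeff m ^ p)) +
      (p : MvPolynomial (Fin n) k) * c := by
  obtain ⟨c, hc⟩ := sum_pow_prime hp f.support (fun m => monomial m (f.coeff m))
  refine ⟨c, ?_⟩
  conv_lhs => rw [f.as_sum]
  rw [hc]
  congr 1
  exact Finset.sum_congr rfl fun m _ => by rw [monomial_pow]

variable {k : Type*} [CommRing k] {n : ℕ}

noncomputable def vv (k : Type*) [CommRing k] {n : ℕ} (a : Fin n → ℕ) (j : ℕ) (i : Fin n) :
    Polynomial (MvPolynomial (Fin n) k) :=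
  Polynomial.X ^ (j * a i) * Polynomial.C (MvPolynomial.X i)

noncomputable def Phi (a : Fin n → ℕ) (f : MvPolynomial (Fin n) k) (j : ℕ) :
    Polynomial (MvPolynomial (Fin n) k) :=
  aeval (vv k a j) f

noncomputable def Psi (p : ℕ) (a : Fin n → ℕ) (f : MvPolynomial (Fin n) k) :
    Polynomial (MvPolynomial (Fin n) k) :=
  ∏ j ∈ Finset.range p, Phi a f j

noncomputable def mm (k : Type*) [CommRing k] (n p : ℕ) : Polynomial (MvPolynomial (Fin n) k) :=
  Polynomial.X ^ p - Polynomial.C 1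

noncomputable def Rr (p : ℕ) (a : Fin n → ℕ) (f : MvPolynomial (Fin n) k) :
    Polynomial (MvPolynomial (Fin n) k) :=
  Psi p a f %ₘ mm k n p

variable {p : ℕ}

lemma monic_mm (hp : p ≠ 0) : (mm k n p).Monic :=
  Polynomial.monic_X_pow_sub_C 1 hp

noncomputable abbrev qmk (k : Type*) [CommRing k] (n p : ℕ) :=
  Ideal.Quotient.mk (Ideal.span {mm k n p})

lemma qmk_mm : qmk k n p (mm k n p) = 0 :=
  Ideal.Quotient.eq_zero_iff_mem.mpr (Ideal.subset_span (Set.mem_singleton _))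

lemma qmk_X_pow_p : (qmk k n p) Polynomial.X ^ p = 1 := by
  have h : qmk k n p (Polynomial.X ^ p - Polynomial.C 1) = 0 := qmk_mm
  rw [map_sub, map_pow, Polynomial.C_1, map_one, sub_eq_zero] at h
  exact h

lemma qmk_X_pow (s : ℕ) : qmk k n p (Polynomial.X ^ s) = qmk k n p Polynomial.X ^ (s % p) := by
  conv_lhs => rw [← Nat.div_add_mod s p]
  rw [pow_add, pow_mul, map_mul, map_pow, map_pow, map_pow, qmk_X_pow_p]
  have h1 : ∀ y : Polynomial (MvPolynomial (Fin n) k) ⧸ Ideal.span {mm k n p}, (1 : Polynomial (MvPolynomial (Fin n) k) ⧸ Ideal.span {mm k n p}) ^ (s / p) * y = y :=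
    fun y => (congrArg (· * y) (one_pow (s / p))).trans (one_mul y)
  exact h1 _

lemma qmk_X_pow_congr {s₁ s₂ : ℕ} (h : s₁ ≡ s₂ [MOD p]) :
    qmk k n p (Polynomial.X ^ s₁) = qmk k n p (Polynomial.X ^ s₂) := by
  rw [qmk_X_pow, qmk_X_pow, (h : s₁ % p = s₂ % p)]

lemma qmk_monomial (s : ℕ) (c : MvPolynomial (Fin n) k) :
    qmk k n p (Polynomial.monomial s c) = qmk k n p (Polynomial.monomial (s % p) c) := by
  rw [← Polynomial.C_mul_X_pow_eq_monomial, ← Polynomial.C_mul_X_pow_eq_monomial,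
    map_mul, map_mul, qmk_X_pow, qmk_X_pow, Nat.mod_mod_of_dvd s dvd_rfl]

lemma qmk_Phi_congr (a : Fin n → ℕ) (f : MvPolynomial (Fin n) k) {j₁ j₂ : ℕ}
    (hj : j₁ ≡ j₂ [MOD p]) : qmk k n p (Phi a f j₁) = qmk k n p (Phi a f j₂) := by
  have h : (qmk k n p).comp ((aeval (vv k a j₁) :
        MvPolynomial (Fin n) k →ₐ[k] Polynomial (MvPolynomial (Fin n) k)).toRingHom) =
      (qmk k n p).comp ((aeval (vv k a j₂) :
        MvPolynomial (Fin n) k →ₐ[k] Polynomial (MvPolynomial (Fin n) k)).toRingHom) := by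
    apply ringHom_ext
    · intro r; simp [aeval_C]
    · intro i
      simp only [RingHom.comp_apply, AlgHom.toRingHom_eq_coe, RingHom.coe_coe, aeval_X, vv]
      rw [map_mul, map_mul, qmk_X_pow_congr (hj.mul_right (a i))]
  exact RingHom.congr_fun h f

lemma expand_Phi (a : Fin n → ℕ) (f : MvPolynomial (Fin n) k) (c j : ℕ) :
    Polynomial.expand (MvPolynomial (Fin n) k) c (Phi a f j) = Phi a f (c * j) := by
  have h : ((AlgHom.restrictScalars k (Polynomial.expand (MvPolynomial (Fin n) k) c) :
      Polynomial (MvPolynomial (Fin n) k) →ₐ[k] Polynomial (MvPolynomial (Fin n) k))).comp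
      (aeval (vv k a j) : MvPolynomial (Fin n) k →ₐ[k] Polynomial (MvPolynomial (Fin n) k)) =
      aeval (vv k a (c * j)) := by
    rw [comp_aeval]
    congr 1
    funext i
    simp only [AlgHom.coe_restrictScalars', vv, map_mul, map_pow, Polynomial.expand_X,
      Polynomial.expand_C, ← pow_mul]
    congr 2
    ring
  exact AlgHom.congr_fun h f

lemma qmk_expand_Psi (hp : p.Prime) (a : Fin n → ℕ) (f : MvPolynomial (Fin n) k)
    {c : ℕ} (hc : c.Coprime p) :
    qmk k n p (Polynomial.expand _ c (Psi p a f)) = qmk k n p (Psi p a f) := by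
  have e1 : Polynomial.expand (MvPolynomial (Fin n) k) c (Psi p a f) =
      ∏ j ∈ Finset.range p, Polynomial.expand (MvPolynomial (Fin n) k) c (Phi a f j) :=
    map_prod _ _ _
  have e2 : qmk k n p (Psi p a f) = ∏ j ∈ Finset.range p, qmk k n p (Phi a f j) :=
    map_prod _ _ _
  have e3 : qmk k n p (∏ j ∈ Finset.range p,
        Polynomial.expand (MvPolynomial (Fin n) k) c (Phi a f j)) =
      ∏ j ∈ Finset.range p, qmk k n p
        (Polynomial.expand (MvPolynomial (Fin n) k) c (Phi a f j)) :=
    map_prod _ _ _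
  rw [e1, e3, e2]
  have h1 : ∀ j ∈ Finset.range p, qmk k n p (Polynomial.expand _ c (Phi a f j)) =
      qmk k n p (Phi a f ((c * j) % p)) := fun j _ => by
    rw [expand_Phi]; exact qmk_Phi_congr a f (Nat.mod_modEq (c * j) p).symm
  rw [Finset.prod_congr rfl h1]
  refine Finset.prod_bij (fun j _ => (c * j) % p) ?_ ?_ ?_ ?_
  · intro j _; exact Finset.mem_range.mpr (Nat.mod_lt _ hp.pos)
  · intro j₁ hj₁ j₂ hj₂ hmod
    have : j₁ ≡ j₂ [MOD p] :=
      Nat.ModEq.cancel_left_of_coprime (Nat.Coprime.symm hc) (hmod : c * j₁ ≡ c * j₂ [MOD p])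
    have h1 := Nat.mod_eq_of_lt (Finset.mem_range.mp hj₁)
    have h2 := Nat.mod_eq_of_lt (Finset.mem_range.mp hj₂)
    rw [Nat.ModEq] at this; omega
  · intro b hb
    refine ⟨(c ^ (p - 2) * b) % p, Finset.mem_range.mpr (Nat.mod_lt _ hp.pos), ?_⟩
    have h1 : c * ((c ^ (p - 2) * b) % p) ≡ c ^ (p - 1) * b [MOD p] := by
      calc c * ((c ^ (p - 2) * b) % p) ≡ c * (c ^ (p - 2) * b) [MOD p] :=
            Nat.ModEq.mul_left c (Nat.mod_modEq _ p)
        _ = c ^ (p - 1) * b := by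
            rw [← mul_assoc, ← pow_succ']
            congr 2
            have := hp.two_le
            omega
    have h2 : c ^ (p - 1) * b ≡ 1 * b [MOD p] := by
      refine Nat.ModEq.mul_right b ?_
      have := Nat.ModEq.pow_totient hc
      rwa [Nat.totient_prime hp] at this
    have h3 := h1.trans h2
    rw [Nat.ModEq, one_mul] at h3
    show c * (c ^ (p - 2) * b % p) % p = b
    rw [h3]
    exact Nat.mod_eq_of_lt (Finset.mem_range.mp hb)
  · intro j _; rfl

lemma degree_mm [Nontrivial k] (hp : 0 < p) : (mm k n p).degree = p := by
  have : mm k n p = Polynomial.X ^ p - Polynomial.C 1 := rfl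
  rw [this, Polynomial.degree_X_pow_sub_C hp]

lemma natDegree_Rr_lt [Nontrivial k] (hp : p.Prime) (a : Fin n → ℕ)
    (f : MvPolynomial (Fin n) k) : (Rr p a f).natDegree < p := by
  have h := Polynomial.degree_modByMonic_lt (Psi p a f) (monic_mm hp.ne_zero)
  rw [degree_mm hp.pos] at h
  rcases eq_or_ne (Rr p a f) 0 with h0 | h0
  · rw [h0]; simpa using hp.pos
  · exact (Polynomial.natDegree_lt_iff_degree_lt h0).mpr (by exact_mod_cast h)

lemma degree_Rr_lt [Nontrivial k] (hp : p.Prime) (a : Fin n → ℕ)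
    (f : MvPolynomial (Fin n) k) : (Rr p a f).degree < p := by
  have h := Polynomial.degree_modByMonic_lt (Psi p a f) (monic_mm hp.ne_zero)
  rwa [degree_mm hp.pos] at h

lemma qmk_Rr (hp : p.Prime) (a : Fin n → ℕ) (f : MvPolynomial (Fin n) k) :
    qmk k n p (Rr p a f) = qmk k n p (Psi p a f) := by
  conv_rhs => rw [← Polynomial.modByMonic_add_div (Psi p a f) (mm k n p)]
  rw [map_add, map_mul, qmk_mm]
  have hz : ∀ x y : Polynomial (MvPolynomial (Fin n) k) ⧸ Ideal.span {mm k n p}, x + 0 * y = x :=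
    fun x y => (congrArg (x + ·) (zero_mul y)).trans (add_zero x)
  exact (hz _ _).symm

lemma coeff_Rr [IsDomain k] (hp : p.Prime) (a : Fin n → ℕ) (f : MvPolynomial (Fin n) k)
    {t : ℕ} (h1 : 1 ≤ t) (h2 : t < p) : (Rr p a f).coeff t = (Rr p a f).coeff 1 := by
  have hpne := hp.ne_zero
  have hco : t.Coprime p :=
    Nat.Coprime.symm ((hp.coprime_iff_not_dvd).mpr
      (fun hd => absurd (Nat.le_of_dvd (by omega) hd) (by omega)))
  set R := Rr p a f with hR
  have hRdeg : R.natDegree < p := natDegree_Rr_lt hp a f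
  have hexp : Polynomial.expand (MvPolynomial (Fin n) k) t R =
      ∑ s ∈ Finset.range p, Polynomial.monomial (s * t) (R.coeff s) := by
    conv_lhs => rw [R.as_sum_range' p hRdeg]
    rw [map_sum]
    exact Finset.sum_congr rfl fun s _ => Polynomial.expand_monomial _ _ _
  set R' : Polynomial (MvPolynomial (Fin n) k) :=
    ∑ s ∈ Finset.range p, Polynomial.monomial ((s * t) % p) (R.coeff s) with hR'
  have hmk1 : qmk k n p (Polynomial.expand _ t R) = qmk k n p R' := by
    rw [hexp, hR', map_sum, map_sum]
    exact Finset.sum_congr rfl fun s _ => qmk_monomial _ _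
  have hq0 : qmk k n p (Polynomial.expand _ t (mm k n p)) = 0 := by
    have hmmeq : Polynomial.expand (MvPolynomial (Fin n) k) t (mm k n p) =
        Polynomial.X ^ (t * p) - Polynomial.C 1 := by
      show Polynomial.expand _ t (Polynomial.X ^ p - Polynomial.C 1) = _
      rw [map_sub, map_pow, Polynomial.expand_X, Polynomial.expand_C, ← pow_mul]
    rw [hmmeq, map_sub, qmk_X_pow, Nat.mul_mod_left, pow_zero, Polynomial.C_1, map_one, sub_self]
  have hmkexpR : qmk k n p (Polynomial.expand _ t R) =
      qmk k n p (Polynomial.expand _ t (Psi p a f)) := by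
    conv_rhs => rw [← Polynomial.modByMonic_add_div (Psi p a f) (mm k n p)]
    rw [map_add, map_mul, map_add, map_mul, hq0]
    have hz : ∀ x y : Polynomial (MvPolynomial (Fin n) k) ⧸ Ideal.span {mm k n p}, x + 0 * y = x :=
      fun x y => (congrArg (x + ·) (zero_mul y)).trans (add_zero x)
    exact (hz _ _).symm
  have hmkR'R : qmk k n p R' = qmk k n p R := by
    rw [← hmk1, hmkexpR, qmk_expand_Psi hp a f hco, ← qmk_Rr hp a f]
  have hR'R : R' = R := by
    have hdvd : mm k n p ∣ R' - R :=
      Ideal.mem_span_singleton.mp (Ideal.Quotient.eq.mp hmkR'R)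
    have hdegR' : R'.degree < (p : WithBot ℕ) := by
      apply lt_of_le_of_lt (Polynomial.degree_sum_le _ _)
      rw [Finset.sup_lt_iff (by exact WithBot.bot_lt_coe _)]
      intro s _
      exact lt_of_le_of_lt (Polynomial.degree_monomial_le _ _)
        (by exact_mod_cast Nat.mod_lt _ hp.pos)
    have hdeg : (R' - R).degree < (mm k n p).degree := by
      rw [degree_mm hp.pos]
      exact lt_of_le_of_lt (Polynomial.degree_sub_le _ _)
        (max_lt hdegR' (degree_Rr_lt hp a f))
    have := Polynomial.eq_zero_of_dvd_of_degree_lt hdvd hdeg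
    exact sub_eq_zero.mp this
  have hkey : R'.coeff t = R.coeff 1 := by
    rw [hR', Polynomial.finset_sum_coeff]
    rw [Finset.sum_eq_single 1]
    · rw [Polynomial.coeff_monomial, if_pos (by rw [one_mul]; exact Nat.mod_eq_of_lt h2)]
    · intro s hs hne
      rw [Polynomial.coeff_monomial, if_neg]
      intro heq
      apply hne
      have hst : s * t ≡ 1 * t [MOD p] := by
        show (s * t) % p = (1 * t) % p
        rw [heq, one_mul, Nat.mod_eq_of_lt h2]
      have hs1 : s ≡ 1 [MOD p] :=
        Nat.ModEq.cancel_right_of_coprime (Nat.Coprime.symm hco) hst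
      rw [Nat.ModEq, Nat.mod_eq_of_lt (Finset.mem_range.mp hs),
        Nat.mod_eq_of_lt hp.one_lt] at hs1
      exact hs1
    · intro h1mem
      exact absurd (Finset.mem_range.mpr hp.one_lt) h1mem
  rw [← hR'R, hkey, hR'R]

lemma eval_one_Phi (a : Fin n → ℕ) (f : MvPolynomial (Fin n) k) (j : ℕ) :
    Polynomial.eval 1 (Phi a f j) = f := by
  have h : (Polynomial.evalRingHom (1 : MvPolynomial (Fin n) k)).comp
      ((aeval (vv k a j) : MvPolynomial (Fin n) k →ₐ[k]
        Polynomial (MvPolynomial (Fin n) k)).toRingHom) =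
      RingHom.id (MvPolynomial (Fin n) k) := by
    apply ringHom_ext
    · intro r
      simp [Polynomial.algebraMap_apply, MvPolynomial.algebraMap_eq]
    · intro i
      simp [vv]
  exact RingHom.congr_fun h f

lemma eval_one_Psi {p : ℕ} (a : Fin n → ℕ) (f : MvPolynomial (Fin n) k) :
    Polynomial.eval 1 (Psi p a f) = f ^ p := by
  have e : Psi p a f = ∏ j ∈ Finset.range p, Phi a f j := rfl
  rw [e, Polynomial.eval_prod, Finset.prod_congr rfl (fun j _ => eval_one_Phi a f j),
    Finset.prod_const, Finset.card_range]

lemma sum_coeff_Rr [Nontrivial k] (hp : p.Prime) (a : Fin n → ℕ) (f : MvPolynomial (Fin n) k) :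
    ∑ s ∈ Finset.range p, (Rr p a f).coeff s = f ^ p := by
  have h1 : Polynomial.eval 1 (mm k n p) = 0 := by
    show Polynomial.eval 1 (Polynomial.X ^ p - Polynomial.C 1) = 0
    simp
  have h3 : Polynomial.eval 1 (Psi p a f) = Polynomial.eval 1 (Rr p a f) := by
    conv_lhs => rw [← Polynomial.modByMonic_add_div (Psi p a f) (mm k n p)]
    rw [Polynomial.eval_add, Polynomial.eval_mul, h1, zero_mul, add_zero]
    rfl
  have h4 : Polynomial.eval 1 (Rr p a f) = ∑ s ∈ Finset.range p, (Rr p a f).coeff s := by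
    conv_lhs => rw [(Rr p a f).as_sum_range' p (natDegree_Rr_lt hp a f)]
    rw [Polynomial.eval_finset_sum]
    exact Finset.sum_congr rfl fun s _ => by simp
  rw [← h4, ← h3, eval_one_Psi]

lemma E_Phi {S : Type*} [CommRing S] (ψ : k →+* S) (ξ : S) (a : Fin n → ℕ)
    (f : MvPolynomial (Fin n) k) (j : ℕ) :
    Polynomial.eval₂ (MvPolynomial.map ψ) (MvPolynomial.C ξ) (Phi a f j) =
      bind₁ (fun i => MvPolynomial.C (ξ ^ (j * a i)) * MvPolynomial.X i)
        (MvPolynomial.map ψ f) := by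
  have h : (Polynomial.eval₂RingHom
        (MvPolynomial.map ψ : MvPolynomial (Fin n) k →+* MvPolynomial (Fin n) S)
        (MvPolynomial.C ξ)).comp
      ((aeval (vv k a j) : MvPolynomial (Fin n) k →ₐ[k]
        Polynomial (MvPolynomial (Fin n) k)).toRingHom) =
      ((bind₁ fun i => MvPolynomial.C (ξ ^ (j * a i)) * MvPolynomial.X i :
          MvPolynomial (Fin n) S →ₐ[S] MvPolynomial (Fin n) S).toRingHom).comp
        (MvPolynomial.map ψ : MvPolynomial (Fin n) k →+* MvPolynomial (Fin n) S) := by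
    apply ringHom_ext
    · intro r
      simp [Polynomial.algebraMap_apply, MvPolynomial.algebraMap_eq]
    · intro i
      simp only [RingHom.comp_apply, AlgHom.toRingHom_eq_coe, RingHom.coe_coe, aeval_X, vv,
        map_mul, map_pow, Polynomial.coe_eval₂RingHom, Polynomial.eval₂_X, Polynomial.eval₂_C,
        MvPolynomial.map_X, bind₁_X_right]
  exact RingHom.congr_fun h f

lemma sum_pow_eq_zero {S : Type*} [CommRing S] [IsDomain S] {ξ : S} {q : ℕ} (hq : q ≠ 0)
    (h1 : ξ ^ q = 1) (hne : ξ ≠ 1) : ∑ t ∈ Finset.range q, ξ ^ t = 0 := by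
  have h := geom_sum_mul ξ q
  rw [h1, sub_self] at h
  rcases mul_eq_zero.mp h with h' | h'
  · exact h'
  · exact absurd (sub_eq_zero.mp h') hne

end Stmt0Aux


theorem stmt0 (K L : Type*) [Field K] [NumberField K] [Field L] [NumberField L]
    [Algebra K L] (n p : ℕ) (hp : p.Prime)
    (f : MvPolynomial (Fin n) (𝓞 K))
    (ζ : Fin n → 𝓞 L) (hζ : ∀ i, ζ i ^ p = 1) :
    ∃ g : MvPolynomial (Fin n) (𝓞 K),
      MvPolynomial.map (algebraMap (𝓞 K) (𝓞 L)) g =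
        ∏ j ∈ Finset.range p,
          MvPolynomial.bind₁ (fun i => C (ζ i ^ j) * X i)
            (MvPolynomial.map (algebraMap (𝓞 K) (𝓞 L)) f) ∧
      ∃ h : MvPolynomial (Fin n) (𝓞 K),
        g - (f.support.sum fun m => monomial (p • m) (f.coeff m ^ p)) = p • h := by
  classical
  obtain ⟨c, hc⟩ := Stmt0Aux.frob hp f
  by_cases htriv : ∀ i, ζ i = 1
  · refine ⟨f ^ p, ?_, c, ?_⟩
    · have h1 : ∀ j ∈ Finset.range p, (bind₁ (fun i => C (ζ i ^ j) * X i))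
          (MvPolynomial.map (algebraMap (𝓞 K) (𝓞 L)) f) =
          MvPolynomial.map (algebraMap (𝓞 K) (𝓞 L)) f := by
        intro j _
        have hfun : (fun i => C (ζ i ^ j) * X i) =
            (X : Fin n → MvPolynomial (Fin n) (𝓞 L)) :=
          funext fun i => by rw [htriv i, one_pow, map_one, one_mul]
        rw [hfun, bind₁_X_left, AlgHom.id_apply]
      rw [Finset.prod_congr rfl h1, Finset.prod_const, Finset.card_range, map_pow]
    · rw [nsmul_eq_mul, hc, add_sub_cancel_left]
  · push_neg at htriv
    obtain ⟨i₀, hi₀⟩ := htriv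
    have hζp : (ζ i₀) ^ p = 1 := hζ i₀
    haveI : NeZero p := ⟨hp.ne_zero⟩
    have hord : orderOf (ζ i₀) = p := by
      have hdvd := orderOf_dvd_of_pow_eq_one hζp
      rcases hp.eq_one_or_self_of_dvd _ hdvd with h | h
      · exact absurd (orderOf_eq_one_iff.mp h) hi₀
      · exact h
    have hprim : IsPrimitiveRoot (ζ i₀) p := hord ▸ IsPrimitiveRoot.orderOf (ζ i₀)
    have hpow : ∀ i, ∃ e : ℕ, (ζ i₀) ^ e = ζ i := fun i => by
      obtain ⟨e, _, he⟩ := hprim.eq_pow_of_pow_eq_one (hζ i)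
      exact ⟨e, he⟩
    choose a ha using hpow
    have hEΦ : ∀ j, Polynomial.eval₂RingHom
        (MvPolynomial.map (algebraMap (𝓞 K) (𝓞 L)) :
          MvPolynomial (Fin n) (𝓞 K) →+* MvPolynomial (Fin n) (𝓞 L))
        (MvPolynomial.C (ζ i₀)) (Stmt0Aux.Phi a f j) =
        bind₁ (fun i => C (ζ i ^ j) * X i)
          (MvPolynomial.map (algebraMap (𝓞 K) (𝓞 L)) f) := by
      intro j
      have h0 : Polynomial.eval₂RingHom
          (MvPolynomial.map (algebraMap (𝓞 K) (𝓞 L)) :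
            MvPolynomial (Fin n) (𝓞 K) →+* MvPolynomial (Fin n) (𝓞 L))
          (MvPolynomial.C (ζ i₀)) (Stmt0Aux.Phi a f j) =
          bind₁ (fun i => C ((ζ i₀) ^ (j * a i)) * X i)
            (MvPolynomial.map (algebraMap (𝓞 K) (𝓞 L)) f) :=
        Stmt0Aux.E_Phi _ _ a f j
      rw [h0]
      have hfe : (fun i => MvPolynomial.C ((ζ i₀) ^ (j * a i)) * MvPolynomial.X i) =
          fun i => C (ζ i ^ j) * (X i : MvPolynomial (Fin n) (𝓞 L)) := by
        funext i
        rw [← ha i, ← pow_mul, mul_comm (a i) j]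
      rw [hfe]
    have hEm : Polynomial.eval₂RingHom
        (MvPolynomial.map (algebraMap (𝓞 K) (𝓞 L)) :
          MvPolynomial (Fin n) (𝓞 K) →+* MvPolynomial (Fin n) (𝓞 L))
        (MvPolynomial.C (ζ i₀)) (Stmt0Aux.mm (𝓞 K) n p) = 0 := by
      have e : Stmt0Aux.mm (𝓞 K) n p = Polynomial.X ^ p - Polynomial.C 1 := rfl
      rw [e, map_sub, map_pow]
      simp only [Polynomial.coe_eval₂RingHom, Polynomial.eval₂_X, Polynomial.eval₂_C]
      rw [← map_pow, hζp, map_one, map_one, sub_self]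
    have hEΨ : Polynomial.eval₂RingHom
        (MvPolynomial.map (algebraMap (𝓞 K) (𝓞 L)) :
          MvPolynomial (Fin n) (𝓞 K) →+* MvPolynomial (Fin n) (𝓞 L))
        (MvPolynomial.C (ζ i₀)) (Stmt0Aux.Psi p a f) =
        ∏ j ∈ Finset.range p, bind₁ (fun i => C (ζ i ^ j) * X i)
          (MvPolynomial.map (algebraMap (𝓞 K) (𝓞 L)) f) := by
      have e : Stmt0Aux.Psi p a f = ∏ j ∈ Finset.range p, Stmt0Aux.Phi a f j := rfl
      rw [e, map_prod]
      exact Finset.prod_congr rfl fun j _ => hEΦ j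
    have hERΨ : Polynomial.eval₂RingHom
        (MvPolynomial.map (algebraMap (𝓞 K) (𝓞 L)) :
          MvPolynomial (Fin n) (𝓞 K) →+* MvPolynomial (Fin n) (𝓞 L))
        (MvPolynomial.C (ζ i₀)) (Stmt0Aux.Psi p a f) =
        Polynomial.eval₂RingHom
        (MvPolynomial.map (algebraMap (𝓞 K) (𝓞 L)) :
          MvPolynomial (Fin n) (𝓞 K) →+* MvPolynomial (Fin n) (𝓞 L))
        (MvPolynomial.C (ζ i₀)) (Stmt0Aux.Rr p a f) := by
      conv_lhs => rw [← Polynomial.modByMonic_add_div (Stmt0Aux.Psi p a f)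
        (Stmt0Aux.mm (𝓞 K) n p)]
      rw [map_add, map_mul, hEm, zero_mul, add_zero]
      rfl
    have hER : Polynomial.eval₂RingHom
        (MvPolynomial.map (algebraMap (𝓞 K) (𝓞 L)) :
          MvPolynomial (Fin n) (𝓞 K) →+* MvPolynomial (Fin n) (𝓞 L))
        (MvPolynomial.C (ζ i₀)) (Stmt0Aux.Rr p a f) =
        MvPolynomial.map (algebraMap (𝓞 K) (𝓞 L))
          ((Stmt0Aux.Rr p a f).coeff 0 - (Stmt0Aux.Rr p a f).coeff 1) := by
      have h0 : Polynomial.eval₂ (MvPolynomial.map (algebraMap (𝓞 K) (𝓞 L)) :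
            MvPolynomial (Fin n) (𝓞 K) →+* MvPolynomial (Fin n) (𝓞 L))
          (MvPolynomial.C (ζ i₀)) (Stmt0Aux.Rr p a f) =
          ∑ s ∈ Finset.range p,
            MvPolynomial.map (algebraMap (𝓞 K) (𝓞 L)) ((Stmt0Aux.Rr p a f).coeff s) *
              (MvPolynomial.C (ζ i₀)) ^ s :=
        Polynomial.eval₂_eq_sum_range' _ (Stmt0Aux.natDegree_Rr_lt hp a f) _
      have h0' : Polynomial.eval₂RingHom (MvPolynomial.map (algebraMap (𝓞 K) (𝓞 L)) :
            MvPolynomial (Fin n) (𝓞 K) →+* MvPolynomial (Fin n) (𝓞 L))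
          (MvPolynomial.C (ζ i₀)) (Stmt0Aux.Rr p a f) =
          ∑ s ∈ Finset.range p,
            MvPolynomial.map (algebraMap (𝓞 K) (𝓞 L)) ((Stmt0Aux.Rr p a f).coeff s) *
              (MvPolynomial.C (ζ i₀)) ^ s := h0
      rw [h0', Finset.range_eq_Ico, Finset.sum_eq_sum_Ico_succ_bot hp.pos]
      have hcoeq : ∀ s ∈ Finset.Ico 1 p,
          MvPolynomial.map (algebraMap (𝓞 K) (𝓞 L)) ((Stmt0Aux.Rr p a f).coeff s) *
            (MvPolynomial.C (ζ i₀)) ^ s =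
          MvPolynomial.map (algebraMap (𝓞 K) (𝓞 L)) ((Stmt0Aux.Rr p a f).coeff 1) *
            MvPolynomial.C ((ζ i₀) ^ s) := fun s hs => by
        obtain ⟨hs1, hs2⟩ := Finset.mem_Ico.mp hs
        rw [Stmt0Aux.coeff_Rr hp a f hs1 hs2, ← map_pow]
      rw [Finset.sum_congr rfl hcoeq, ← Finset.mul_sum, ← map_sum]
      have hsum : ∑ s ∈ Finset.Ico 1 p, (ζ i₀) ^ s = -1 := by
        have h1 : ∑ s ∈ Finset.range p, (ζ i₀) ^ s = 0 :=
          Stmt0Aux.sum_pow_eq_zero hp.ne_zero hζp hi₀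
        rw [Finset.range_eq_Ico, Finset.sum_eq_sum_Ico_succ_bot hp.pos, pow_zero] at h1
        exact eq_neg_of_add_eq_zero_right h1
      rw [hsum, map_sub, pow_zero, mul_one, map_neg, map_one, mul_neg_one, sub_eq_add_neg]
    refine ⟨(Stmt0Aux.Rr p a f).coeff 0 - (Stmt0Aux.Rr p a f).coeff 1, ?_,
      c - (Stmt0Aux.Rr p a f).coeff 1, ?_⟩
    · exact hER.symm.trans (hERΨ.symm.trans hEΨ)
    · have hfp : ∑ s ∈ Finset.range p, (Stmt0Aux.Rr p a f).coeff s = f ^ p :=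
        Stmt0Aux.sum_coeff_Rr hp a f
      have hsum2 : ∑ s ∈ Finset.range p, (Stmt0Aux.Rr p a f).coeff s =
          (Stmt0Aux.Rr p a f).coeff 0 + (p - 1 : ℕ) • (Stmt0Aux.Rr p a f).coeff 1 := by
        rw [Finset.range_eq_Ico, Finset.sum_eq_sum_Ico_succ_bot hp.pos,
          Finset.sum_congr rfl (fun s hs => by
            obtain ⟨hs1, hs2⟩ := Finset.mem_Ico.mp hs
            exact Stmt0Aux.coeff_Rr hp a f hs1 hs2),
          Finset.sum_const, Nat.card_Ico]
      have hb0 : (Stmt0Aux.Rr p a f).coeff 0 +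
          ((p : MvPolynomial (Fin n) (𝓞 K)) - 1) * (Stmt0Aux.Rr p a f).coeff 1 = f ^ p := by
        rw [← hfp, hsum2, nsmul_eq_mul]
        congr 2
        rw [Nat.cast_sub hp.one_lt.le, Nat.cast_one]
      rw [nsmul_eq_mul]
      linear_combination hc + hb0
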